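/- arXiv:0807.2563 — 4 statements merged into one kernel-verified Lean document; each statement's English description precedes it below -/
import Mathlib

section
/- Let n1, n2 be positive integers, x_{ij} ∈ ℝ for j = 1,…,n_i, i = 1,2, let h : ℝ → ℝ^d be a function, set ρ1 = n1/n2 and w_{ij}(θ) = exp(α + β·h(x_{ij})) for θ = (α, β) ∈ ℝ × ℝ^d, and define l(θ) = −Σ_{i=1}^{2} Σ_{j=1}^{n_i} log(1 + ρ1 w_{ij}(θ)) + Σ_{j=1}^{n_1} (α + β·h(x_{1j})). For q > 1 and λ > 0, define the penalized empirical log-likelihood l_p(θ) = l(θ) − λ Σ_{k=1}^{d} |β_k|^q. Then l_p attains its supremum: there exists θ̂ ∈ ℝ × ℝ^d with l_p(θ̂) = sup_{θ} l_p(θ). -/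
/-- The profile empirical log-likelihood of the density ratio model:
`l(θ) = −Σ_{i,j} log(1 + ρ1 exp(α + β·h(x_{ij}))) + Σ_{j=1}^{n1} (α + β·h(x_{1j}))`
with `ρ1 = n1/n2`, for `θ = (α, β) ∈ ℝ × ℝ^d`. -/
noncomputable def ell {n1 n2 d : ℕ} (x1 : Fin n1 → ℝ) (x2 : Fin n2 → ℝ)
    (h : ℝ → Fin d → ℝ) (θ : ℝ × (Fin d → ℝ)) : ℝ :=
  (- ∑ j, Real.log (1 + ((n1 : ℝ) / (n2 : ℝ)) *
        Real.exp (θ.1 + ∑ k, θ.2 k * h (x1 j) k))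
   - ∑ j, Real.log (1 + ((n1 : ℝ) / (n2 : ℝ)) *
        Real.exp (θ.1 + ∑ k, θ.2 k * h (x2 j) k)))
  + ∑ j, (θ.1 + ∑ k, θ.2 k * h (x1 j) k)

set_option maxHeartbeats 1000000 in
/-- For `q > 1` and regularization parameter `λ > 0`, the
penalized empirical log-likelihood `l_p(θ) = l(θ) − λ Σ_k |β_k|^q` attains
its supremum over `ℝ × ℝ^d`. -/
theorem penalized_likelihood_attains_sup {n1 n2 d : ℕ}
    (hn1 : 0 < n1) (hn2 : 0 < n2)
    (x1 : Fin n1 → ℝ) (x2 : Fin n2 → ℝ) (h : ℝ → Fin d → ℝ)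
    (q lam : ℝ) (hq : 1 < q) (hlam : 0 < lam) :
    ∃ θhat : ℝ × (Fin d → ℝ),
      ∀ θ : ℝ × (Fin d → ℝ),
        ell x1 x2 h θ - lam * ∑ k, |θ.2 k| ^ q
          ≤ ell x1 x2 h θhat - lam * ∑ k, |θhat.2 k| ^ q := by
  classical
  set ρ : ℝ := (n1 : ℝ) / (n2 : ℝ) with hρdef
  have hρ : 0 < ρ := div_pos (by exact_mod_cast hn1) (by exact_mod_cast hn2)
  set F : ℝ × (Fin d → ℝ) → ℝ :=
    fun θ => ell x1 x2 h θ - lam * ∑ k, |θ.2 k| ^ q with hF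
  -- positivity of the argument of log
  have hpos : ∀ s : ℝ, 0 < 1 + ρ * Real.exp s := fun s => by positivity
  -- continuity of F
  have hs1 : ∀ (x : ℝ), Continuous (fun θ : ℝ × (Fin d → ℝ) =>
      θ.1 + ∑ k, θ.2 k * h x k) := fun x =>
    continuous_fst.add (continuous_finset_sum _ fun k _ =>
      ((continuous_apply k).comp continuous_snd).mul continuous_const)
  have hlogc : ∀ (x : ℝ), Continuous (fun θ : ℝ × (Fin d → ℝ) =>
      Real.log (1 + ρ * Real.exp (θ.1 + ∑ k, θ.2 k * h x k))) := fun x =>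
    Continuous.log
      (continuous_const.add (continuous_const.mul (Real.continuous_exp.comp (hs1 x))))
      (fun θ => (hpos _).ne')
  have hq0 : (0:ℝ) ≤ q := by linarith
  have hpen : Continuous (fun θ : ℝ × (Fin d → ℝ) => ∑ k, |θ.2 k| ^ q) :=
    continuous_finset_sum _ fun k _ =>
      Continuous.rpow_const ((continuous_apply k).comp continuous_snd).abs
        (fun θ => Or.inr hq0)
  have hcont : Continuous F := by
    apply Continuous.sub _ (continuous_const.mul hpen)
    unfold ell
    exact (((continuous_finset_sum _ fun j _ => hlogc (x1 j)).neg.sub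
        (continuous_finset_sum _ fun j _ => hlogc (x2 j))).add
      (continuous_finset_sum _ fun j _ => hs1 (x1 j)))
  -- basic log bounds
  have hlogge : ∀ s : ℝ, Real.log ρ + s ≤ Real.log (1 + ρ * Real.exp s) := by
    intro s
    have h1 : Real.log ρ + s = Real.log (ρ * Real.exp s) := by
      rw [Real.log_mul hρ.ne' (Real.exp_pos s).ne', Real.log_exp]
    rw [h1]
    exact Real.log_le_log (by positivity) (by linarith)
  have hlognn : ∀ s : ℝ, 0 ≤ Real.log (1 + ρ * Real.exp s) := fun s =>
    Real.log_nonneg (by nlinarith [Real.exp_pos s, hρ])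
  set c1 : ℝ := -Real.log ρ with hc1
  set j1 : Fin n1 := ⟨0, hn1⟩
  set j2 : Fin n2 := ⟨0, hn2⟩
  -- the key upper bound on F
  have hub : ∀ θ : ℝ × (Fin d → ℝ),
      F θ ≤ min (θ.1 + ∑ k, θ.2 k * h (x1 j1) k) c1
        + min 0 (c1 - (θ.1 + ∑ k, θ.2 k * h (x2 j2) k))
        + ((n1 : ℝ) - 1) * c1 - lam * ∑ k, |θ.2 k| ^ q := by
    intro θ
    have hP : (0:ℝ) ≤ ∑ k, |θ.2 k| ^ q :=
      Finset.sum_nonneg fun k _ => Real.rpow_nonneg (abs_nonneg _) q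
    have key1 : ∑ j, (θ.1 + ∑ k, θ.2 k * h (x1 j) k)
        - ∑ j, Real.log (1 + ρ * Real.exp (θ.1 + ∑ k, θ.2 k * h (x1 j) k))
        ≤ min (θ.1 + ∑ k, θ.2 k * h (x1 j1) k) c1 + ((n1 : ℝ) - 1) * c1 := by
      rw [← Finset.sum_sub_distrib]
      have hterm : ∀ j : Fin n1,
          (θ.1 + ∑ k, θ.2 k * h (x1 j) k)
            - Real.log (1 + ρ * Real.exp (θ.1 + ∑ k, θ.2 k * h (x1 j) k))
          ≤ min (θ.1 + ∑ k, θ.2 k * h (x1 j) k) c1 := by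
        intro j
        apply le_min
        · have := hlognn (θ.1 + ∑ k, θ.2 k * h (x1 j) k); linarith
        · have := hlogge (θ.1 + ∑ k, θ.2 k * h (x1 j) k); simp only [hc1]; linarith
      calc ∑ j, ((θ.1 + ∑ k, θ.2 k * h (x1 j) k)
            - Real.log (1 + ρ * Real.exp (θ.1 + ∑ k, θ.2 k * h (x1 j) k)))
          ≤ ∑ j, min (θ.1 + ∑ k, θ.2 k * h (x1 j) k) c1 :=
            Finset.sum_le_sum fun j _ => hterm j
        _ = min (θ.1 + ∑ k, θ.2 k * h (x1 j1) k) c1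
            + ∑ j ∈ Finset.univ.erase j1, min (θ.1 + ∑ k, θ.2 k * h (x1 j) k) c1 :=
            (Finset.add_sum_erase _ _ (Finset.mem_univ j1)).symm
        _ ≤ min (θ.1 + ∑ k, θ.2 k * h (x1 j1) k) c1 + ((n1 : ℝ) - 1) * c1 := by
            gcongr
            calc ∑ j ∈ Finset.univ.erase j1, min (θ.1 + ∑ k, θ.2 k * h (x1 j) k) c1
                ≤ ∑ _j ∈ Finset.univ.erase j1, c1 :=
                  Finset.sum_le_sum fun j _ => min_le_right _ _
              _ = ((n1 : ℝ) - 1) * c1 := by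
                  rw [Finset.sum_const, Finset.card_erase_of_mem (Finset.mem_univ j1),
                    Finset.card_univ, Fintype.card_fin, nsmul_eq_mul]
                  have : ((n1 - 1 : ℕ) : ℝ) = (n1 : ℝ) - 1 := by
                    have : (1:ℕ) ≤ n1 := hn1
                    push_cast [this]; ring
                  rw [this]
    have key2 : - ∑ j, Real.log (1 + ρ * Real.exp (θ.1 + ∑ k, θ.2 k * h (x2 j) k))
        ≤ min 0 (c1 - (θ.1 + ∑ k, θ.2 k * h (x2 j2) k)) := by
      have h1 : Real.log (1 + ρ * Real.exp (θ.1 + ∑ k, θ.2 k * h (x2 j2) k))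
          ≤ ∑ j, Real.log (1 + ρ * Real.exp (θ.1 + ∑ k, θ.2 k * h (x2 j) k)) :=
        Finset.single_le_sum
          (f := fun j => Real.log (1 + ρ * Real.exp (θ.1 + ∑ k, θ.2 k * h (x2 j) k)))
          (fun j _ => hlognn _) (Finset.mem_univ j2)
      apply le_min
      · have := hlognn (θ.1 + ∑ k, θ.2 k * h (x2 j2) k); linarith
      · have := hlogge (θ.1 + ∑ k, θ.2 k * h (x2 j2) k); simp only [hc1]; linarith
    have : F θ = (∑ j, (θ.1 + ∑ k, θ.2 k * h (x1 j) k)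
        - ∑ j, Real.log (1 + ρ * Real.exp (θ.1 + ∑ k, θ.2 k * h (x1 j) k)))
        + (- ∑ j, Real.log (1 + ρ * Real.exp (θ.1 + ∑ k, θ.2 k * h (x2 j) k)))
        - lam * ∑ k, |θ.2 k| ^ q := by
      simp only [hF, ell]; ring
    rw [this]
    linarith [key1, key2]
  -- coercivity: eventually along cocompact, F θ ≤ F (0, 0)
  set θ0 : ℝ × (Fin d → ℝ) := (0, fun _ => 0) with hθ0
  set M : ℝ := F θ0 with hM
  set K : ℝ := (∑ k, |h (x1 j1) k|) + (∑ k, |h (x2 j2) k|) with hK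
  have hKnn : 0 ≤ K :=
    add_nonneg (Finset.sum_nonneg fun k _ => abs_nonneg _)
      (Finset.sum_nonneg fun k _ => abs_nonneg _)
  set B : ℝ := max 1 (((n1 : ℝ) * c1 - M) / lam) with hB
  have hB1 : (1:ℝ) ≤ B := le_max_left _ _
  have hB0 : (0:ℝ) < B := lt_of_lt_of_le one_pos hB1
  set R : ℝ := max B (((n1 : ℝ) + 1) * |c1| + B * K - M) with hR
  have hBR : B ≤ R := le_max_left _ _
  have hcoer : ∀ θ : ℝ × (Fin d → ℝ), R ≤ ‖θ‖ → F θ ≤ M := by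
    intro θ hθ
    obtain ⟨α, β⟩ := θ
    have hP : (0:ℝ) ≤ ∑ k, |β k| ^ q :=
      Finset.sum_nonneg fun k _ => Real.rpow_nonneg (abs_nonneg _) q
    have hubθ := hub (α, β)
    simp only at hubθ
    by_cases hβ : B ≤ ‖β‖
    · -- large β: the penalty dominates
      obtain ⟨k0, hk0⟩ : ∃ k, B ≤ |β k| := by
        by_contra hcon
        push_neg at hcon
        have : ‖β‖ < B := by
          rw [pi_norm_lt_iff hB0]
          intro k; rw [Real.norm_eq_abs]; exact hcon k
        linarith
      have hBq : B ≤ |β k0| ^ q := by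
        calc B = B ^ (1:ℝ) := (Real.rpow_one B).symm
          _ ≤ B ^ q := Real.rpow_le_rpow_of_exponent_le hB1 hq.le
          _ ≤ |β k0| ^ q := Real.rpow_le_rpow hB0.le hk0 hq0
      have hPB : B ≤ ∑ k, |β k| ^ q := by
        calc B ≤ |β k0| ^ q := hBq
          _ ≤ ∑ k, |β k| ^ q :=
            Finset.single_le_sum (f := fun k => |β k| ^ q)
              (fun k _ => Real.rpow_nonneg (abs_nonneg _) q) (Finset.mem_univ k0)
      have hlamB : (n1 : ℝ) * c1 - M ≤ lam * B := by
        have h1 : ((n1 : ℝ) * c1 - M) / lam ≤ B := le_max_right _ _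
        calc (n1 : ℝ) * c1 - M = lam * (((n1 : ℝ) * c1 - M) / lam) := by
              field_simp
          _ ≤ lam * B := by gcongr
      have h1 : min (α + ∑ k, β k * h (x1 j1) k) c1 ≤ c1 := min_le_right _ _
      have h2 : min 0 (c1 - (α + ∑ k, β k * h (x2 j2) k)) ≤ 0 := min_le_left _ _
      have h3 : lam * B ≤ lam * ∑ k, |β k| ^ q := by gcongr
      calc F (α, β) ≤ _ := hubθ
        _ ≤ c1 + 0 + ((n1:ℝ) - 1) * c1 - lam * B := by linarith
        _ ≤ M := by linarith
    · -- bounded β, large |α|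
      push_neg at hβ
      have hα : R ≤ |α| := by
        have : ‖(α, β)‖ = max ‖α‖ ‖β‖ := rfl
        rw [this] at hθ
        rcases max_cases ‖α‖ ‖β‖ with ⟨he, _⟩ | ⟨he, _⟩
        · rw [he] at hθ; rwa [Real.norm_eq_abs] at hθ
        · rw [he] at hθ; linarith
      have hdot : ∀ (x : ℝ), (∑ k, |h x k| ≤ K → |∑ k, β k * h x k| ≤ B * K) := by
        intro x hx
        calc |∑ k, β k * h x k| ≤ ∑ k, |β k * h x k| := Finset.abs_sum_le_sum_abs _ _
          _ ≤ ∑ k, B * |h x k| := by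
              apply Finset.sum_le_sum
              intro k _
              rw [abs_mul]
              have hbk : |β k| ≤ B := by
                have := norm_le_pi_norm β k
                rw [Real.norm_eq_abs] at this
                linarith
              exact mul_le_mul_of_nonneg_right hbk (abs_nonneg _)
          _ = B * ∑ k, |h x k| := by rw [Finset.mul_sum]
          _ ≤ B * K := by gcongr
      have hd1 : |∑ k, β k * h (x1 j1) k| ≤ B * K :=
        hdot (x1 j1) (by
          have : 0 ≤ ∑ k, |h (x2 j2) k| := Finset.sum_nonneg fun k _ => abs_nonneg _
          simp only [hK]; linarith)
      have hd2 : |∑ k, β k * h (x2 j2) k| ≤ B * K :=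
        hdot (x2 j2) (by
          have : 0 ≤ ∑ k, |h (x1 j1) k| := Finset.sum_nonneg fun k _ => abs_nonneg _
          simp only [hK]; linarith)
      have hRM : ((n1 : ℝ) + 1) * |c1| + B * K - M ≤ R := le_max_right _ _
      have habs1 : |∑ k, β k * h (x1 j1) k| ≥ -(B*K) := by
        have := abs_nonneg (∑ k, β k * h (x1 j1) k)
        nlinarith [mul_nonneg hB0.le hKnn]
      have hc1abs : c1 ≤ |c1| := le_abs_self c1
      have hn1R : (1:ℝ) ≤ (n1:ℝ) := by exact_mod_cast hn1
      rcases le_or_gt 0 α with hα0 | hα0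
      · -- α ≥ R
        have hαR : R ≤ α := by rwa [abs_of_nonneg hα0] at hα
        have h1 : min (α + ∑ k, β k * h (x1 j1) k) c1 ≤ c1 := min_le_right _ _
        have h2 : min 0 (c1 - (α + ∑ k, β k * h (x2 j2) k)) ≤
            c1 - α + B * K := by
          have := min_le_right (0:ℝ) (c1 - (α + ∑ k, β k * h (x2 j2) k))
          have := neg_abs_le (∑ k, β k * h (x2 j2) k)
          linarith
        calc F (α, β) ≤ _ := hubθ
          _ ≤ c1 + (c1 - α + B * K) + ((n1:ℝ) - 1) * c1 - 0 := by
              have h3 : 0 ≤ lam * ∑ k, |β k| ^ q := mul_nonneg hlam.le hP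
              have hmul : ((n1:ℝ) - 1) * c1 ≤ ((n1:ℝ) - 1) * |c1| := by
                apply mul_le_mul_of_nonneg_left hc1abs; linarith
              linarith
          _ ≤ M := by
              have hmul : ((n1:ℝ) - 1) * c1 ≤ ((n1:ℝ) - 1) * |c1| := by
                apply mul_le_mul_of_nonneg_left hc1abs; linarith
              nlinarith
      · -- α ≤ -R
        have hαR : α ≤ -R := by
          rw [abs_of_neg hα0] at hα; linarith
        have h1 : min (α + ∑ k, β k * h (x1 j1) k) c1 ≤ α + B * K := by
          have := min_le_left (α + ∑ k, β k * h (x1 j1) k) c1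
          have := le_abs_self (∑ k, β k * h (x1 j1) k)
          linarith
        have h2 : min 0 (c1 - (α + ∑ k, β k * h (x2 j2) k)) ≤ 0 := min_le_left _ _
        calc F (α, β) ≤ _ := hubθ
          _ ≤ (α + B * K) + 0 + ((n1:ℝ) - 1) * c1 - 0 := by
              have h3 : 0 ≤ lam * ∑ k, |β k| ^ q := mul_nonneg hlam.le hP
              linarith
          _ ≤ M := by
              have hmul : ((n1:ℝ) - 1) * c1 ≤ ((n1:ℝ) - 1) * |c1| := by
                apply mul_le_mul_of_nonneg_left hc1abs; linarith
              have habsc : ((n1:ℝ) - 1) * |c1| ≤ ((n1:ℝ) + 1) * |c1| := by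
                apply mul_le_mul_of_nonneg_right _ (abs_nonneg c1); linarith
              nlinarith
  -- conclude by the extreme value theorem
  have hev : ∀ᶠ θ in Filter.cocompact (ℝ × (Fin d → ℝ)), F θ ≤ F θ0 := by
    apply Filter.mem_of_superset
      ((isCompact_closedBall (0 : ℝ × (Fin d → ℝ)) R).compl_mem_cocompact)
    intro θ hθ
    simp only [Set.mem_compl_iff, Metric.mem_closedBall, dist_zero_right, not_le] at hθ
    exact hcoer θ hθ.le
  obtain ⟨θhat, hθhat⟩ := hcont.exists_forall_ge' θ0 hev
  exact ⟨θhat, hθhat⟩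
end

section
/- Let n1, n2 be positive integers, x_{ij} ∈ ℝ for j = 1,…,n_i, i = 1,2, let h : ℝ → ℝ^d be a function, set ρ1 = n1/n2 and w_{ij}(θ) = exp(α + β·h(x_{ij})) for θ = (α, β) ∈ ℝ × ℝ^d, and define l(θ) = −Σ_{i=1}^{2} Σ_{j=1}^{n_i} log(1 + ρ1 w_{ij}(θ)) + Σ_{j=1}^{n_1} (α + β·h(x_{1j})). For λ > 0, define the ridge-penalized empirical log-likelihood l_p(θ) = l(θ) − λ Σ_{k=1}^{d} β_k². Then l_p is strictly concave on ℝ × ℝ^d and has a unique global maximizer θ̂^λ. -/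
set_option maxHeartbeats 1000000
open Real Finset

open Real Finset

lemma g_strictConvex {ρ : ℝ} (hρ : 0 < ρ) :
    StrictConvexOn ℝ Set.univ (fun t => Real.log (1 + ρ * Real.exp t)) := by
  have hpos : ∀ t : ℝ, 0 < 1 + ρ * Real.exp t := fun t => by positivity
  have hd1 : ∀ t : ℝ, HasDerivAt (fun t => Real.log (1 + ρ * Real.exp t))
      (ρ * Real.exp t / (1 + ρ * Real.exp t)) t := by
    intro t
    have h1 : HasDerivAt (fun t : ℝ => 1 + ρ * Real.exp t) (ρ * Real.exp t) t := by
      simpa using ((Real.hasDerivAt_exp t).const_mul ρ).const_add 1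
    exact h1.log (hpos t).ne'
  have hderiv1 : deriv (fun t => Real.log (1 + ρ * Real.exp t))
      = fun t => ρ * Real.exp t / (1 + ρ * Real.exp t) := by
    funext t; exact (hd1 t).deriv
  have hd2 : ∀ t : ℝ, HasDerivAt (fun t => ρ * Real.exp t / (1 + ρ * Real.exp t))
      (ρ * Real.exp t / (1 + ρ * Real.exp t) ^ 2) t := by
    intro t
    have hu : HasDerivAt (fun t : ℝ => ρ * Real.exp t) (ρ * Real.exp t) t :=
      (Real.hasDerivAt_exp t).const_mul ρ
    have hv : HasDerivAt (fun t : ℝ => 1 + ρ * Real.exp t) (ρ * Real.exp t) t := by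
      simpa using ((Real.hasDerivAt_exp t).const_mul ρ).const_add 1
    have := hu.div hv (hpos t).ne'
    exact this.congr_deriv (by ring)
  apply strictConvexOn_univ_of_deriv2_pos
  · exact (continuous_const.add (continuous_const.mul continuous_exp)).log
      (fun t => (hpos t).ne')
  · intro t
    have : deriv^[2] (fun t => Real.log (1 + ρ * Real.exp t)) t
        = ρ * Real.exp t / (1 + ρ * Real.exp t) ^ 2 := by
      simp only [Function.iterate_succ, Function.iterate_zero, Function.comp_apply, id]
      rw [hderiv1]
      exact (hd2 t).deriv
    rw [this]; positivity

lemma lin_comb {d : ℕ} (a b : ℝ) (θ θ' : ℝ × (Fin d → ℝ)) (v : Fin d → ℝ) :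
    (a • θ + b • θ').1 + ∑ k, (a • θ + b • θ').2 k * v k
      = a * (θ.1 + ∑ k, θ.2 k * v k) + b * (θ'.1 + ∑ k, θ'.2 k * v k) := by
  simp only [Prod.fst_add, Prod.smul_fst, smul_eq_mul, Prod.snd_add, Prod.smul_snd,
    Pi.add_apply, Pi.smul_apply]
  have : ∑ k, (a * θ.2 k + b * θ'.2 k) * v k
      = ∑ k, (a * (θ.2 k * v k) + b * (θ'.2 k * v k)) := by
    apply Finset.sum_congr rfl; intros; ring
  rw [this, Finset.sum_add_distrib, ← Finset.mul_sum, ← Finset.mul_sum]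
  ring

lemma combine {a b s1 s1' s1m s2 s2' s2m tm q q' qm lam t t' : ℝ}
    (h1 : s1m ≤ a * s1 + b * s1') (h2 : s2m ≤ a * s2 + b * s2')
    (ht : tm = a * t + b * t') (hq : qm ≤ a * q + b * q') (hlam : 0 ≤ lam)
    (hstrict : s1m < a * s1 + b * s1' ∨ lam * qm < lam * (a * q + b * q')) :
    a * (-s1 - s2 + t - lam * q) + b * (-s1' - s2' + t' - lam * q')
      < -s1m - s2m + tm - lam * qm := by
  have hq' := mul_le_mul_of_nonneg_left hq hlam
  rcases hstrict with hs | hs <;> nlinarith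

lemma young {x y lam : ℝ} (hlam : 0 < lam) : -(x * y) ≤ lam * x ^ 2 + y ^ 2 / (4 * lam) := by
  have h := sq_nonneg (x + y / (2 * lam))
  have : lam * (x + y / (2 * lam)) ^ 2 = lam * x ^ 2 + x * y + y ^ 2 / (4 * lam) := by
    field_simp; ring
  nlinarith [mul_nonneg hlam.le h]

lemma phi_le_neg_log {ρ : ℝ} (hρ : 0 < ρ) (t : ℝ) :
    -Real.log (1 + ρ * Real.exp t) + t ≤ -Real.log ρ := by
  have h1 : Real.log (ρ * Real.exp t) ≤ Real.log (1 + ρ * Real.exp t) :=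
    Real.log_le_log (by positivity) (by nlinarith [Real.exp_pos t])
  rw [Real.log_mul hρ.ne' (Real.exp_pos t).ne', Real.log_exp] at h1
  linarith

lemma psi_nonneg {ρ : ℝ} (hρ : 0 < ρ) (t : ℝ) : 0 ≤ Real.log (1 + ρ * Real.exp t) := by
  apply Real.log_nonneg; nlinarith [Real.exp_pos t]

lemma psi_ge {ρ : ℝ} (hρ : 0 < ρ) (t : ℝ) :
    Real.log ρ + t ≤ Real.log (1 + ρ * Real.exp t) := by
  have h1 : Real.log (ρ * Real.exp t) ≤ Real.log (1 + ρ * Real.exp t) :=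
    Real.log_le_log (by positivity) (by nlinarith [Real.exp_pos t])
  rwa [Real.log_mul hρ.ne' (Real.exp_pos t).ne', Real.log_exp] at h1


/-- The ridge-penalized empirical log-likelihood
`l_p(θ) = l(θ) − λ Σ_k β_k²`. -/
noncomputable def ellRidge {n1 n2 d : ℕ} (x1 : Fin n1 → ℝ) (x2 : Fin n2 → ℝ)
    (h : ℝ → Fin d → ℝ) (lam : ℝ) (θ : ℝ × (Fin d → ℝ)) : ℝ :=
  ell x1 x2 h θ - lam * ∑ k, (θ.2 k) ^ 2

/-- For `λ > 0`, the ridge-penalized empirical log-likelihood is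
strictly concave on `ℝ × ℝ^d` and possesses a unique global maximizer. -/
theorem ridge_penalized_strictly_concave_unique_max {n1 n2 d : ℕ}
    (hn1 : 0 < n1) (hn2 : 0 < n2)
    (x1 : Fin n1 → ℝ) (x2 : Fin n2 → ℝ) (h : ℝ → Fin d → ℝ)
    (lam : ℝ) (hlam : 0 < lam) :
    StrictConcaveOn ℝ Set.univ (ellRidge x1 x2 h lam) ∧
    ∃! θhat : ℝ × (Fin d → ℝ),
      ∀ θ : ℝ × (Fin d → ℝ),
        ellRidge x1 x2 h lam θ ≤ ellRidge x1 x2 h lam θhat := by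
  have hsc : StrictConcaveOn ℝ Set.univ (ellRidge x1 x2 h lam) := by

    have hρ : (0:ℝ) < (n1 : ℝ) / (n2 : ℝ) := by positivity
    set ρ : ℝ := (n1 : ℝ) / (n2 : ℝ) with hρdef
    have hgsc := g_strictConvex hρ
    have hgc := hgsc.convexOn
    refine ⟨convex_univ, ?_⟩
    intro θ _ θ' _ hne a b ha hb hab
    -- per-term convexity bounds
    have hterm : ∀ (y : ℝ),
        Real.log (1 + ρ * Real.exp ((a • θ + b • θ').1 + ∑ k, (a • θ + b • θ').2 k * h y k))
          ≤ a * Real.log (1 + ρ * Real.exp (θ.1 + ∑ k, θ.2 k * h y k))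
            + b * Real.log (1 + ρ * Real.exp (θ'.1 + ∑ k, θ'.2 k * h y k)) := by
      intro y
      have := hgc.2 (Set.mem_univ (θ.1 + ∑ k, θ.2 k * h y k))
        (Set.mem_univ (θ'.1 + ∑ k, θ'.2 k * h y k)) ha.le hb.le hab
      simp only [smul_eq_mul] at this
      rw [lin_comb a b θ θ' (h y)]
      exact this
    have h1 : ∑ j, Real.log (1 + ρ * Real.exp ((a • θ + b • θ').1 +
          ∑ k, (a • θ + b • θ').2 k * h (x1 j) k))
        ≤ a * ∑ j, Real.log (1 + ρ * Real.exp (θ.1 + ∑ k, θ.2 k * h (x1 j) k))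
          + b * ∑ j, Real.log (1 + ρ * Real.exp (θ'.1 + ∑ k, θ'.2 k * h (x1 j) k)) := by
      calc _ ≤ ∑ j, (a * Real.log (1 + ρ * Real.exp (θ.1 + ∑ k, θ.2 k * h (x1 j) k))
            + b * Real.log (1 + ρ * Real.exp (θ'.1 + ∑ k, θ'.2 k * h (x1 j) k))) :=
          Finset.sum_le_sum fun j _ => hterm (x1 j)
        _ = _ := by rw [Finset.sum_add_distrib, Finset.mul_sum, Finset.mul_sum]
    have h2 : ∑ j, Real.log (1 + ρ * Real.exp ((a • θ + b • θ').1 +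
          ∑ k, (a • θ + b • θ').2 k * h (x2 j) k))
        ≤ a * ∑ j, Real.log (1 + ρ * Real.exp (θ.1 + ∑ k, θ.2 k * h (x2 j) k))
          + b * ∑ j, Real.log (1 + ρ * Real.exp (θ'.1 + ∑ k, θ'.2 k * h (x2 j) k)) := by
      calc _ ≤ ∑ j, (a * Real.log (1 + ρ * Real.exp (θ.1 + ∑ k, θ.2 k * h (x2 j) k))
            + b * Real.log (1 + ρ * Real.exp (θ'.1 + ∑ k, θ'.2 k * h (x2 j) k))) :=
          Finset.sum_le_sum fun j _ => hterm (x2 j)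
        _ = _ := by rw [Finset.sum_add_distrib, Finset.mul_sum, Finset.mul_sum]
    have ht : ∑ j, ((a • θ + b • θ').1 + ∑ k, (a • θ + b • θ').2 k * h (x1 j) k)
        = a * ∑ j, (θ.1 + ∑ k, θ.2 k * h (x1 j) k)
          + b * ∑ j, (θ'.1 + ∑ k, θ'.2 k * h (x1 j) k) := by
      rw [Finset.mul_sum, Finset.mul_sum, ← Finset.sum_add_distrib]
      exact Finset.sum_congr rfl fun j _ => lin_comb a b θ θ' (h (x1 j))
    have hmk : ∀ k, (a • θ + b • θ').2 k = a * θ.2 k + b * θ'.2 k := fun k => rfl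
    have hqterm : ∀ k, ((a • θ + b • θ').2 k) ^ 2 ≤ a * (θ.2 k) ^ 2 + b * (θ'.2 k) ^ 2 := by
      intro k; rw [hmk k]
      nlinarith [sq_nonneg (θ.2 k - θ'.2 k), mul_pos ha hb]
    have hq : ∑ k, ((a • θ + b • θ').2 k) ^ 2
        ≤ a * ∑ k, (θ.2 k) ^ 2 + b * ∑ k, (θ'.2 k) ^ 2 := by
      calc _ ≤ ∑ k, (a * (θ.2 k) ^ 2 + b * (θ'.2 k) ^ 2) :=
          Finset.sum_le_sum fun k _ => hqterm k
        _ = _ := by rw [Finset.sum_add_distrib, Finset.mul_sum, Finset.mul_sum]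
    -- strictness
    have hstrict : (∑ j, Real.log (1 + ρ * Real.exp ((a • θ + b • θ').1 +
          ∑ k, (a • θ + b • θ').2 k * h (x1 j) k))
        < a * ∑ j, Real.log (1 + ρ * Real.exp (θ.1 + ∑ k, θ.2 k * h (x1 j) k))
          + b * ∑ j, Real.log (1 + ρ * Real.exp (θ'.1 + ∑ k, θ'.2 k * h (x1 j) k)))
        ∨ lam * ∑ k, ((a • θ + b • θ').2 k) ^ 2
          < lam * (a * ∑ k, (θ.2 k) ^ 2 + b * ∑ k, (θ'.2 k) ^ 2) := by
      by_cases hb2 : θ.2 = θ'.2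
      · left
        have ha1 : θ.1 ≠ θ'.1 := by
          intro h1; exact hne (Prod.ext h1 hb2)
        have hterm' : ∀ j : Fin n1,
            Real.log (1 + ρ * Real.exp ((a • θ + b • θ').1 + ∑ k, (a • θ + b • θ').2 k * h (x1 j) k))
              < a * Real.log (1 + ρ * Real.exp (θ.1 + ∑ k, θ.2 k * h (x1 j) k))
                + b * Real.log (1 + ρ * Real.exp (θ'.1 + ∑ k, θ'.2 k * h (x1 j) k)) := by
          intro j
          have hargne : θ.1 + ∑ k, θ.2 k * h (x1 j) k ≠ θ'.1 + ∑ k, θ'.2 k * h (x1 j) k := by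
            rw [hb2]; intro hcontra
            exact ha1 (by linarith [add_right_cancel hcontra])
          have := hgsc.2 (Set.mem_univ (θ.1 + ∑ k, θ.2 k * h (x1 j) k))
            (Set.mem_univ (θ'.1 + ∑ k, θ'.2 k * h (x1 j) k)) hargne ha hb hab
          simp only [smul_eq_mul] at this
          rw [lin_comb a b θ θ' (h (x1 j))]
          exact this
        have hne' : (Finset.univ : Finset (Fin n1)).Nonempty :=
          Finset.univ_nonempty_iff.mpr (Fin.pos_iff_nonempty.mp hn1)
        calc _ < ∑ j, (a * Real.log (1 + ρ * Real.exp (θ.1 + ∑ k, θ.2 k * h (x1 j) k))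
              + b * Real.log (1 + ρ * Real.exp (θ'.1 + ∑ k, θ'.2 k * h (x1 j) k))) :=
            Finset.sum_lt_sum_of_nonempty hne' fun j _ => hterm' j
          _ = _ := by rw [Finset.sum_add_distrib, Finset.mul_sum, Finset.mul_sum]
      · right
        obtain ⟨k0, hk0⟩ := Function.ne_iff.mp hb2
        apply mul_lt_mul_of_pos_left _ hlam
        calc ∑ k, ((a • θ + b • θ').2 k) ^ 2
            < ∑ k, (a * (θ.2 k) ^ 2 + b * (θ'.2 k) ^ 2) := by
              apply Finset.sum_lt_sum (fun k _ => hqterm k)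
              refine ⟨k0, Finset.mem_univ k0, ?_⟩
              rw [hmk k0]
              nlinarith [sq_nonneg (θ.2 k0 - θ'.2 k0), mul_pos ha hb,
                sub_ne_zero_of_ne hk0, sq_pos_of_ne_zero (sub_ne_zero_of_ne hk0)]
          _ = _ := by rw [Finset.sum_add_distrib, Finset.mul_sum, Finset.mul_sum]
    simp only [smul_eq_mul, ellRidge, ell]
    exact combine h1 h2 ht hq hlam.le hstrict
  have hex : ∃ θhat : ℝ × (Fin d → ℝ),
      ∀ θ : ℝ × (Fin d → ℝ),
        ellRidge x1 x2 h lam θ ≤ ellRidge x1 x2 h lam θhat := by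

    have hρ : (0:ℝ) < (n1 : ℝ) / (n2 : ℝ) := by positivity
    set ρ : ℝ := (n1 : ℝ) / (n2 : ℝ) with hρdef
    set f := ellRidge x1 x2 h lam with hfdef
    set j0 : Fin n1 := ⟨0, hn1⟩
    set j1 : Fin n2 := ⟨0, hn2⟩
    set A : ℝ := n1 * |Real.log ρ| with hAdef
    set B : ℝ := n1 * |Real.log ρ| + |Real.log ρ|
        + (∑ k, (h (x2 j1) k) ^ 2) / (4 * lam)
        + (∑ k, (h (x1 j0) k) ^ 2) / (4 * lam) with hBdef
    -- the "phi-sum bound": -S1 + T ≤ n1 |log ρ|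
    have hA0 : ∀ θ : ℝ × (Fin d → ℝ),
        - ∑ j, Real.log (1 + ρ * Real.exp (θ.1 + ∑ k, θ.2 k * h (x1 j) k))
          + ∑ j, (θ.1 + ∑ k, θ.2 k * h (x1 j) k) ≤ n1 * |Real.log ρ| := by
      intro θ
      have heq : - ∑ j, Real.log (1 + ρ * Real.exp (θ.1 + ∑ k, θ.2 k * h (x1 j) k))
          + ∑ j, (θ.1 + ∑ k, θ.2 k * h (x1 j) k)
          = ∑ j, (-Real.log (1 + ρ * Real.exp (θ.1 + ∑ k, θ.2 k * h (x1 j) k))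
              + (θ.1 + ∑ k, θ.2 k * h (x1 j) k)) := by
        rw [← Finset.sum_neg_distrib, ← Finset.sum_add_distrib]
      rw [heq]
      calc _ ≤ ∑ _j : Fin n1, |Real.log ρ| := by
            apply Finset.sum_le_sum
            intro j _
            have := phi_le_neg_log hρ (θ.1 + ∑ k, θ.2 k * h (x1 j) k)
            have h2 := neg_abs_le (Real.log ρ)
            linarith
        _ = n1 * |Real.log ρ| := by
            simp [Finset.sum_const, Finset.card_univ, nsmul_eq_mul]
    have hS2nonneg : ∀ θ : ℝ × (Fin d → ℝ),
        0 ≤ ∑ j, Real.log (1 + ρ * Real.exp (θ.1 + ∑ k, θ.2 k * h (x2 j) k)) :=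
      fun θ => Finset.sum_nonneg fun j _ => psi_nonneg hρ _
    -- Bound B1 : f θ ≤ A - lam * Q θ
    have hB1 : ∀ θ : ℝ × (Fin d → ℝ), f θ ≤ A - lam * ∑ k, (θ.2 k) ^ 2 := by
      intro θ
      have h1 := hA0 θ
      have h2 := hS2nonneg θ
      simp only [hfdef, ellRidge, ell, hAdef]
      linarith
    -- young sum bounds
    have hyoung : ∀ (v : Fin d → ℝ) (β : Fin d → ℝ),
        -(∑ k, β k * v k) ≤ lam * ∑ k, (β k) ^ 2 + (∑ k, (v k) ^ 2) / (4 * lam) := by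
      intro v β
      have : ∑ k, (-(β k * v k)) ≤ ∑ k, (lam * (β k) ^ 2 + (v k) ^ 2 / (4 * lam)) :=
        Finset.sum_le_sum fun k _ => young hlam
      rw [Finset.sum_neg_distrib, Finset.sum_add_distrib, ← Finset.mul_sum,
        ← Finset.sum_div] at this
      exact this
    have hyoung' : ∀ (v : Fin d → ℝ) (β : Fin d → ℝ),
        (∑ k, β k * v k) ≤ lam * ∑ k, (β k) ^ 2 + (∑ k, (v k) ^ 2) / (4 * lam) := by
      intro v β
      have := hyoung v (fun k => -(β k))
      simp only [neg_mul, Finset.sum_neg_distrib, neg_neg, neg_sq] at this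
      exact this
    -- Bound B2 : f θ ≤ B - |θ.1|
    have hB2 : ∀ θ : ℝ × (Fin d → ℝ), f θ ≤ B - |θ.1| := by
      intro θ
      rcases le_or_gt 0 θ.1 with hα | hα
      · -- use the j1 term of group 2
        have h1 := hA0 θ
        have h2 : Real.log (1 + ρ * Real.exp (θ.1 + ∑ k, θ.2 k * h (x2 j1) k))
            ≤ ∑ j, Real.log (1 + ρ * Real.exp (θ.1 + ∑ k, θ.2 k * h (x2 j) k)) :=
          Finset.single_le_sum
            (f := fun j => Real.log (1 + ρ * Real.exp (θ.1 + ∑ k, θ.2 k * h (x2 j) k)))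
            (fun j _ => psi_nonneg hρ _) (Finset.mem_univ j1)
        have h3 := psi_ge hρ (θ.1 + ∑ k, θ.2 k * h (x2 j1) k)
        have h4 := hyoung (h (x2 j1)) θ.2
        have h5 := neg_abs_le (Real.log ρ)
        have h6 : (0:ℝ) ≤ (∑ k, (h (x1 j0) k) ^ 2) / (4 * lam) := by positivity
        have h7 : |θ.1| = θ.1 := abs_of_nonneg hα
        simp only [hfdef, ellRidge, ell, hBdef]
        linarith
      · -- α < 0 : use the j0 term of group 1
        have h2 := hS2nonneg θ
        -- split the phi-sum at j0
        have hsplit : ∑ j, (-Real.log (1 + ρ * Real.exp (θ.1 + ∑ k, θ.2 k * h (x1 j) k))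
              + (θ.1 + ∑ k, θ.2 k * h (x1 j) k))
            = (-Real.log (1 + ρ * Real.exp (θ.1 + ∑ k, θ.2 k * h (x1 j0) k))
              + (θ.1 + ∑ k, θ.2 k * h (x1 j0) k))
            + ∑ j ∈ Finset.univ.erase j0,
              (-Real.log (1 + ρ * Real.exp (θ.1 + ∑ k, θ.2 k * h (x1 j) k))
              + (θ.1 + ∑ k, θ.2 k * h (x1 j) k)) :=
          (Finset.add_sum_erase Finset.univ
            (fun j => -Real.log (1 + ρ * Real.exp (θ.1 + ∑ k, θ.2 k * h (x1 j) k))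
              + (θ.1 + ∑ k, θ.2 k * h (x1 j) k)) (Finset.mem_univ j0)).symm
        have hrest : ∑ j ∈ Finset.univ.erase j0,
              (-Real.log (1 + ρ * Real.exp (θ.1 + ∑ k, θ.2 k * h (x1 j) k))
              + (θ.1 + ∑ k, θ.2 k * h (x1 j) k)) ≤ n1 * |Real.log ρ| := by
          calc _ ≤ ∑ _j ∈ Finset.univ.erase j0, |Real.log ρ| := by
                apply Finset.sum_le_sum
                intro j _
                have := phi_le_neg_log hρ (θ.1 + ∑ k, θ.2 k * h (x1 j) k)
                have h5 := neg_abs_le (Real.log ρ)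
                linarith
            _ = (Finset.univ.erase j0).card * |Real.log ρ| := by
                rw [Finset.sum_const, nsmul_eq_mul]
            _ ≤ n1 * |Real.log ρ| := by
                apply mul_le_mul_of_nonneg_right _ (abs_nonneg _)
                have hc : (Finset.univ.erase j0).card ≤ n1 := by
                  calc (Finset.univ.erase j0).card ≤ (Finset.univ : Finset (Fin n1)).card :=
                      Finset.card_le_card (Finset.erase_subset _ _)
                    _ = n1 := by simp
                exact_mod_cast hc
        have hj0 : -Real.log (1 + ρ * Real.exp (θ.1 + ∑ k, θ.2 k * h (x1 j0) k))
              + (θ.1 + ∑ k, θ.2 k * h (x1 j0) k) ≤ θ.1 + ∑ k, θ.2 k * h (x1 j0) k := by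
          have := psi_nonneg hρ (θ.1 + ∑ k, θ.2 k * h (x1 j0) k)
          linarith
        have h4 := hyoung' (h (x1 j0)) θ.2
        have heq : - ∑ j, Real.log (1 + ρ * Real.exp (θ.1 + ∑ k, θ.2 k * h (x1 j) k))
            + ∑ j, (θ.1 + ∑ k, θ.2 k * h (x1 j) k)
            = ∑ j, (-Real.log (1 + ρ * Real.exp (θ.1 + ∑ k, θ.2 k * h (x1 j) k))
                + (θ.1 + ∑ k, θ.2 k * h (x1 j) k)) := by
          rw [← Finset.sum_neg_distrib, ← Finset.sum_add_distrib]
        have h6 : (0:ℝ) ≤ (∑ k, (h (x2 j1) k) ^ 2) / (4 * lam) := by positivity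
        have h7 : |θ.1| = -θ.1 := abs_of_neg hα
        have h8 : (0:ℝ) ≤ |Real.log ρ| := abs_nonneg _
        simp only [hfdef, ellRidge, ell, hBdef]
        linarith
    -- continuity
    have hcont : Continuous f := by
      have hbase : ∀ y : ℝ, Continuous (fun θ : ℝ × (Fin d → ℝ) => θ.1 + ∑ k, θ.2 k * h y k) := by
        intro y
        apply Continuous.add continuous_fst
        apply continuous_finset_sum
        intro k _
        exact ((continuous_apply k).comp continuous_snd).mul continuous_const
      have hlog : ∀ y : ℝ, Continuous (fun θ : ℝ × (Fin d → ℝ) =>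
          Real.log (1 + ρ * Real.exp (θ.1 + ∑ k, θ.2 k * h y k))) := by
        intro y
        apply Continuous.log
        · exact continuous_const.add (continuous_const.mul (Real.continuous_exp.comp (hbase y)))
        · intro θ; positivity
      have hQ : Continuous (fun θ : ℝ × (Fin d → ℝ) => ∑ k, (θ.2 k) ^ 2) := by
        apply continuous_finset_sum; intro k _
        exact ((continuous_apply k).comp continuous_snd).pow 2
      show Continuous (ellRidge x1 x2 h lam)
      unfold ellRidge ell
      apply Continuous.sub
      · apply Continuous.add
        · apply Continuous.sub
          · exact (continuous_finset_sum _ fun j _ => hlog (x1 j)).neg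
          · exact continuous_finset_sum _ fun j _ => hlog (x2 j)
        · exact continuous_finset_sum _ fun j _ => hbase (x1 j)
      · exact continuous_const.mul hQ
    -- radius
    set R : ℝ := 1 + max (B - f 0) (Real.sqrt (max 0 (A - f 0) / lam)) with hRdef
    have hR0 : 0 < R := by
      have h1 := Real.sqrt_nonneg (max 0 (A - f 0) / lam)
      have h2 := le_max_right (B - f 0) (Real.sqrt (max 0 (A - f 0) / lam))
      rw [hRdef]; linarith
    have hout : ∀ θ : ℝ × (Fin d → ℝ), R < ‖θ‖ → f θ < f 0 := by
      intro θ hθ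
      rw [Prod.norm_def] at hθ
      rcases lt_max_iff.mp hθ with h1 | h1
      · rw [Real.norm_eq_abs] at h1
        have hb := hB2 θ
        have hmax1 : B - f 0 ≤ R - 1 := by
          have := le_max_left (B - f 0) (Real.sqrt (max 0 (A - f 0) / lam))
          rw [hRdef]; linarith
        linarith
      · have hk : ∃ k, R < |θ.2 k| := by
          by_contra hcon
          push_neg at hcon
          have : ‖θ.2‖ ≤ R := by
            apply (pi_norm_le_iff_of_nonneg hR0.le).mpr
            intro k; rw [Real.norm_eq_abs]; exact hcon k
          linarith
        obtain ⟨k, hk⟩ := hk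
        have hQk : R ^ 2 < ∑ k', (θ.2 k') ^ 2 := by
          have h2 : R ^ 2 < (θ.2 k) ^ 2 := by
            nlinarith [sq_abs (θ.2 k), abs_nonneg (θ.2 k)]
          have h3 : (θ.2 k) ^ 2 ≤ ∑ k', (θ.2 k') ^ 2 :=
            Finset.single_le_sum (f := fun k' => (θ.2 k') ^ 2)
              (fun k' _ => sq_nonneg _) (Finset.mem_univ k)
          linarith
        have hb := hB1 θ
        have hsq : max 0 (A - f 0) / lam ≤ R ^ 2 := by
          have h4 : Real.sqrt (max 0 (A - f 0) / lam) ≤ R := by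
            have := le_max_right (B - f 0) (Real.sqrt (max 0 (A - f 0) / lam))
            rw [hRdef]; linarith
          have h5 := Real.sqrt_nonneg (max 0 (A - f 0) / lam)
          calc max 0 (A - f 0) / lam = Real.sqrt (max 0 (A - f 0) / lam) ^ 2 :=
              (Real.sq_sqrt (by positivity)).symm
            _ ≤ R ^ 2 := by nlinarith
        have h6 : A - f 0 ≤ lam * R ^ 2 := by
          have h7 := (div_le_iff₀ hlam).mp hsq
          have h8 := le_max_right 0 (A - f 0)
          nlinarith
        have h9 : lam * R ^ 2 < lam * ∑ k', (θ.2 k') ^ 2 :=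
          mul_lt_mul_of_pos_left hQk hlam
        linarith
    have hcpt : IsCompact (Metric.closedBall (0 : ℝ × (Fin d → ℝ)) R) :=
      isCompact_closedBall _ _
    obtain ⟨θhat, hmem, hmax⟩ := hcpt.exists_isMaxOn
      ⟨0, Metric.mem_closedBall_self hR0.le⟩ hcont.continuousOn
    refine ⟨θhat, fun θ => ?_⟩
    by_cases hθ : θ ∈ Metric.closedBall (0 : ℝ × (Fin d → ℝ)) R
    · exact hmax hθ
    · have hlt : R < ‖θ‖ := by
        rw [Metric.mem_closedBall, dist_zero_right] at hθ
        exact not_le.mp hθ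
      exact le_of_lt (lt_of_lt_of_le (hout θ hlt)
        (hmax (Metric.mem_closedBall_self hR0.le)))
  obtain ⟨θhat, hglob⟩ := hex
  refine ⟨hsc, θhat, hglob, fun y hy => ?_⟩
  exact hsc.eq_of_isMaxOn (isMaxOn_iff.mpr fun z _ => hy z)
    (isMaxOn_iff.mpr fun z _ => hglob z) (Set.mem_univ y) (Set.mem_univ θhat)
end

section
/- Let μ be a σ-finite measure on ℝ, g2 a probability density with respect to μ, h : ℝ → ℝ^d measurable, α0 ∈ ℝ, β0 ∈ ℝ^d, and set w(x) = exp(α0 + β0·h(x)). Suppose g1 = w · g2 is also a probability density with respect to μ, and let n1, n2 be positive integers with ρ1 = n1/n2. Then: (a) ∫ (ρ1 w(x)/(1 + ρ1 w(x))) (n1 g1(x) + n2 g2(x)) dμ(x) = n1; and (b) if ∫ ‖h(x)‖ g1(x) dμ(x) < ∞, then ∫ h(x) (ρ1 w(x)/(1 + ρ1 w(x))) (n1 g1(x) + n2 g2(x)) dμ(x) = n1 ∫ h(x) g1(x) dμ(x), with the integrand in (b) μ-integrable. Equivalently, when X_{11},…,X_{1n_1} are i.i.d. with density g1 and X_{21},…,X_{2n_2}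 are i.i.d. with density g2, the score ∇l(θ0) of the empirical log-likelihood at the true parameter θ0 = (α0, β0) has expectation zero. -/
open MeasureTheory

/-- Unbiasedness of the score at the true parameter in the
density ratio model `g1 = exp(α0 + β0·h) g2`.  With `w(x) = exp(α0 + β0·h(x))`
and `ρ1 = n1/n2`:
(a) `∫ (ρ1 w/(1 + ρ1 w)) (n1 g1 + n2 g2) dμ = n1`, and
(b) if `∫ ‖h‖ g1 dμ < ∞` then the `h`-weighted version is integrable and
`∫ (ρ1 w/(1 + ρ1 w)) (n1 g1 + n2 g2) h dμ = n1 ∫ h g1 dμ`.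
Equivalently, the score `∇l(θ0)` has expectation zero. -/
theorem score_mean_zero {d : ℕ} (μ : Measure ℝ) [SigmaFinite μ]
    (g2 : ℝ → ℝ) (hg2meas : Measurable g2)
    (hg2nn : ∀ x, 0 ≤ g2 x) (hg2int : ∫ x, g2 x ∂μ = 1)
    (h : ℝ → Fin d → ℝ) (hh : Measurable h)
    (α0 : ℝ) (β0 : Fin d → ℝ)
    (g1 : ℝ → ℝ)
    (hg1 : ∀ x, g1 x = Real.exp (α0 + ∑ k, β0 k * h x k) * g2 x)
    (hg1int : ∫ x, g1 x ∂μ = 1)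
    (n1 n2 : ℕ) (hn1 : 0 < n1) (hn2 : 0 < n2) :
    (∫ x, ((n1 : ℝ) / (n2 : ℝ) * Real.exp (α0 + ∑ k, β0 k * h x k) /
        (1 + (n1 : ℝ) / (n2 : ℝ) * Real.exp (α0 + ∑ k, β0 k * h x k))) *
        ((n1 : ℝ) * g1 x + (n2 : ℝ) * g2 x) ∂μ = (n1 : ℝ)) ∧
    (Integrable (fun x => ‖h x‖ * g1 x) μ →
      Integrable (fun x =>
        (((n1 : ℝ) / (n2 : ℝ) * Real.exp (α0 + ∑ k, β0 k * h x k) /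
          (1 + (n1 : ℝ) / (n2 : ℝ) * Real.exp (α0 + ∑ k, β0 k * h x k))) *
          ((n1 : ℝ) * g1 x + (n2 : ℝ) * g2 x)) • h x) μ ∧
      ∫ x, (((n1 : ℝ) / (n2 : ℝ) * Real.exp (α0 + ∑ k, β0 k * h x k) /
          (1 + (n1 : ℝ) / (n2 : ℝ) * Real.exp (α0 + ∑ k, β0 k * h x k))) *
          ((n1 : ℝ) * g1 x + (n2 : ℝ) * g2 x)) • h x ∂μ
        = (n1 : ℝ) • ∫ x, g1 x • h x ∂μ) := by

  have hn2' : (n2:ℝ) ≠ 0 := Nat.cast_ne_zero.mpr hn2.ne'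
  have key : ∀ x, ((n1 : ℝ) / (n2 : ℝ) * Real.exp (α0 + ∑ k, β0 k * h x k) /
      (1 + (n1 : ℝ) / (n2 : ℝ) * Real.exp (α0 + ∑ k, β0 k * h x k))) *
      ((n1 : ℝ) * g1 x + (n2 : ℝ) * g2 x) = (n1 : ℝ) * g1 x := by
    intro x
    set w := Real.exp (α0 + ∑ k, β0 k * h x k) with hw
    have hwpos : 0 < w := Real.exp_pos _
    have hden : (1 : ℝ) + (n1 : ℝ) / (n2 : ℝ) * w ≠ 0 := by
      positivity
    rw [hg1 x]
    field_simp
    ring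
  have hg1meas : Measurable g1 := by
    have : g1 = fun x => Real.exp (α0 + ∑ k, β0 k * h x k) * g2 x := funext hg1
    rw [this]
    exact ((measurable_const.add (Finset.measurable_sum _ fun k _ =>
      measurable_const.mul ((measurable_pi_apply k).comp hh))).exp).mul hg2meas
  have hg1nn : ∀ x, 0 ≤ g1 x := fun x => by
    rw [hg1 x]; exact mul_nonneg (Real.exp_pos _).le (hg2nn x)
  constructor
  · simp_rw [key]
    rw [integral_const_mul, hg1int, mul_one]
  · intro hint
    have hbase : Integrable (fun x => g1 x • h x) μ := by
      refine ⟨(hg1meas.aestronglyMeasurable.smul hh.aestronglyMeasurable), ?_⟩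
      refine HasFiniteIntegral.mono' hint.hasFiniteIntegral ?_
      filter_upwards with x
      rw [norm_smul, Real.norm_eq_abs, abs_of_nonneg (hg1nn x)]
      rw [mul_comm]
    constructor
    · refine Integrable.congr (hbase.smul ((n1:ℝ))) ?_
      filter_upwards with x
      simp only [Pi.smul_apply, smul_smul, key x]
    · simp_rw [key, ← smul_smul]
      rw [integral_smul]
end

section
/- Let n1, n2 be positive integers, x_{ij} ∈ ℝ for j = 1,…,n_i, i = 1,2, let h : ℝ → ℝ^d be a function, set ρ1 = n1/n2 and w_{ij}(θ) = exp(α + β·h(x_{ij})) for θ = (α, β) ∈ ℝ × ℝ^d, and define l(θ) = −Σ_{i=1}^{2} Σ_{j=1}^{n_i} log(1 + ρ1 w_{ij}(θ)) + Σ_{j=1}^{n_1} (α + β·h(x_{1j})). Fix q > 1, and for each λ > 0 let θ̂^λ = (α̂^λ, β̂^λ) be any global maximizer of l_p(θ) = l(θ) − λ Σ_{k=1}^{d} |β_k|^q. Then β̂^λ → 0 as λ → ∞; in fact Σ_{k=1}^{d} |β̂^λ_k|^q ≤ C/λ for the finite constant C = −n1 log ρ1 − sup_{α ∈ ℝ}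 l((α, 0)). That is, as the regularization parameter tends to infinity, the penalized estimator of β shrinks towards 0. -/
lemma ell_le {n1 n2 d : ℕ} (hn1 : 0 < n1) (hn2 : 0 < n2)
    (x1 : Fin n1 → ℝ) (x2 : Fin n2 → ℝ) (h : ℝ → Fin d → ℝ)
    (θ : ℝ × (Fin d → ℝ)) :
    ell x1 x2 h θ ≤ -(n1 : ℝ) * Real.log ((n1 : ℝ) / (n2 : ℝ)) := by
  have hρ : (0:ℝ) < (n1 : ℝ) / (n2 : ℝ) :=
    div_pos (by exact_mod_cast hn1) (by exact_mod_cast hn2)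
  set ρ : ℝ := (n1 : ℝ) / (n2 : ℝ)
  have key : ∀ y : ℝ, y ≤ Real.log (1 + ρ * Real.exp y) - Real.log ρ := by
    intro y
    have hexp := Real.exp_pos y
    have h1 : Real.log ρ + y = Real.log (ρ * Real.exp y) := by
      rw [Real.log_mul (ne_of_gt hρ) (ne_of_gt hexp), Real.log_exp]
    have h2 : Real.log (ρ * Real.exp y) ≤ Real.log (1 + ρ * Real.exp y) :=
      Real.log_le_log (mul_pos hρ hexp) (by linarith)
    linarith
  have hnn : ∀ y : ℝ, 0 ≤ Real.log (1 + ρ * Real.exp y) := fun y =>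
    Real.log_nonneg (by nlinarith [Real.exp_pos y, hρ.le, (Real.exp_pos y).le])
  simp only [ell]
  have hA : ∑ j, (θ.1 + ∑ k, θ.2 k * h (x1 j) k)
      - ∑ j, Real.log (1 + ρ * Real.exp (θ.1 + ∑ k, θ.2 k * h (x1 j) k))
      ≤ (n1 : ℝ) * (- Real.log ρ) := by
    rw [← Finset.sum_sub_distrib]
    calc ∑ j, ((θ.1 + ∑ k, θ.2 k * h (x1 j) k)
          - Real.log (1 + ρ * Real.exp (θ.1 + ∑ k, θ.2 k * h (x1 j) k)))
        ≤ ∑ _j : Fin n1, (- Real.log ρ) := by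
          apply Finset.sum_le_sum
          intro j _
          have := key (θ.1 + ∑ k, θ.2 k * h (x1 j) k)
          linarith
      _ = (n1 : ℝ) * (- Real.log ρ) := by
          rw [Finset.sum_const, Finset.card_univ, Fintype.card_fin, nsmul_eq_mul]
  have hB : 0 ≤ ∑ j, Real.log (1 + ρ * Real.exp (θ.1 + ∑ k, θ.2 k * h (x2 j) k)) :=
    Finset.sum_nonneg fun j _ => hnn _
  linarith

/-- Shrinkage of the penalized estimator.  Fix `q > 1` and for
each `λ > 0` let `θ̂^λ` be any global maximizer of
`l_p(θ) = l(θ) − λ Σ_k |β_k|^q`.  Then `Σ_k |β̂^λ_k|^q ≤ C/λ` with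
`C = −n1 log ρ1 − sup_α l((α, 0))`, and consequently `β̂^λ → 0` as
`λ → ∞`. -/
theorem penalized_estimator_shrinks {n1 n2 d : ℕ}
    (hn1 : 0 < n1) (hn2 : 0 < n2)
    (x1 : Fin n1 → ℝ) (x2 : Fin n2 → ℝ) (h : ℝ → Fin d → ℝ)
    (q : ℝ) (hq : 1 < q)
    (θhat : ℝ → ℝ × (Fin d → ℝ))
    (hmax : ∀ lam : ℝ, 0 < lam → ∀ θ : ℝ × (Fin d → ℝ),
      ell x1 x2 h θ - lam * ∑ k, |θ.2 k| ^ q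
        ≤ ell x1 x2 h (θhat lam) - lam * ∑ k, |(θhat lam).2 k| ^ q) :
    (∀ lam : ℝ, 0 < lam →
      ∑ k, |(θhat lam).2 k| ^ q ≤
        (-(n1 : ℝ) * Real.log ((n1 : ℝ) / (n2 : ℝ))
          - sSup (Set.range fun a : ℝ => ell x1 x2 h (a, 0))) / lam) ∧
    Filter.Tendsto (fun lam => (θhat lam).2) Filter.atTop (nhds 0) := by
  have hq0 : q ≠ 0 := by linarith
  set M : ℝ := -(n1 : ℝ) * Real.log ((n1 : ℝ) / (n2 : ℝ)) with hM
  set S : ℝ := sSup (Set.range fun a : ℝ => ell x1 x2 h (a, 0)) with hS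
  have hub := ell_le hn1 hn2 x1 x2 h
  have hzero : ∀ a : ℝ, (∑ k : Fin d, |(((a, 0) : ℝ × (Fin d → ℝ))).2 k| ^ q) = 0 := by
    intro a
    apply Finset.sum_eq_zero
    intro k _
    simp [Real.zero_rpow hq0]
  have hPnn : ∀ lam : ℝ, 0 ≤ ∑ k, |(θhat lam).2 k| ^ q := fun lam =>
    Finset.sum_nonneg fun k _ => Real.rpow_nonneg (abs_nonneg _) q
  -- main bound
  have main : ∀ lam : ℝ, 0 < lam →
      lam * (∑ k, |(θhat lam).2 k| ^ q) ≤ M - S := by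
    intro lam hlam
    have hle : ∀ a : ℝ, ell x1 x2 h (a, 0) ≤ M - lam * ∑ k, |(θhat lam).2 k| ^ q := by
      intro a
      have := hmax lam hlam (a, 0)
      rw [hzero a] at this
      have h2 := hub (θhat lam)
      simp only [mul_zero, sub_zero] at this
      linarith
    have hSle : S ≤ M - lam * ∑ k, |(θhat lam).2 k| ^ q := by
      rw [hS]
      apply csSup_le (Set.range_nonempty _)
      rintro y ⟨a, rfl⟩
      exact hle a
    linarith
  have hCnn : 0 ≤ M - S := le_trans (by nlinarith [hPnn 1]) (main 1 one_pos)
  refine ⟨fun lam hlam => ?_, ?_⟩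
  · rw [le_div_iff₀ hlam, mul_comm]
    exact main lam hlam
  · rw [tendsto_pi_nhds]
    intro k
    have hg : Filter.Tendsto (fun lam : ℝ => ((M - S) / lam) ^ (1 / q))
        Filter.atTop (nhds 0) := by
      have h1 : Filter.Tendsto (fun lam : ℝ => (M - S) / lam) Filter.atTop (nhds 0) :=
        Filter.Tendsto.div_atTop tendsto_const_nhds Filter.tendsto_id
      have := h1.rpow_const (p := 1 / q) (Or.inr (by positivity))
      rwa [Real.zero_rpow (by positivity : (1:ℝ)/q ≠ 0)] at this
    have habs : ∀ᶠ lam : ℝ in Filter.atTop,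
        |(θhat lam).2 k| ≤ ((M - S) / lam) ^ (1 / q) := by
      filter_upwards [Filter.eventually_gt_atTop 0] with lam hlam
      have h1 : |(θhat lam).2 k| ^ q ≤ (M - S) / lam := by
        have hsingle : |(θhat lam).2 k| ^ q ≤ ∑ k, |(θhat lam).2 k| ^ q :=
          Finset.single_le_sum (f := fun k => |(θhat lam).2 k| ^ q)
            (fun i _ => Real.rpow_nonneg (abs_nonneg _) q) (Finset.mem_univ k)
        have h2 := main lam hlam
        rw [le_div_iff₀ hlam, mul_comm]
        exact le_trans (by nlinarith [hPnn lam]) h2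
      calc |(θhat lam).2 k| = (|(θhat lam).2 k| ^ q) ^ (1 / q) := by
            rw [← Real.rpow_mul (abs_nonneg _), mul_one_div, div_self hq0, Real.rpow_one]
        _ ≤ ((M - S) / lam) ^ (1 / q) :=
            Real.rpow_le_rpow (Real.rpow_nonneg (abs_nonneg _) q) h1 (by positivity)
    have hgneg : Filter.Tendsto (fun lam : ℝ => -(((M - S) / lam) ^ (1 / q)))
        Filter.atTop (nhds 0) := by simpa using hg.neg
    show Filter.Tendsto (fun i => (θhat i).2 k) Filter.atTop (nhds 0)
    apply tendsto_of_tendsto_of_tendsto_of_le_of_le' hgneg hg ?_ ?_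
    · filter_upwards [habs] with lam hl
      have := abs_le.mp hl
      simpa using this.1
    · filter_upwards [habs] with lam hl
      exact (abs_le.mp hl).2
end
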